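/- Let x be a mixed action, p, p' ∈ Δ(K) with p(k) > 0 for all k ∈ K, and x' := T(x,p,p'). Then for every i ∈ I and k ∈ K, |x'(i|k) − x(i|k)| ≤ ‖p − p'‖_∞ · ‖1/p‖_∞, where ‖p − p'‖_∞ := max_k |p(k) − p'(k)| and ‖1/p‖_∞ := max_k 1/p(k). -/
import Mathlib


open Finset

noncomputable section
open Classical

/-- `p` is an element of the probability simplex Δ(K). -/
def pSimplex {K : Type*} [Fintype K] (p : K → ℝ) : Prop :=
  (∀ k, 0 ≤ p k) ∧ ∑ k, p k = 1

/-- `x : K → Δ(I)` is a mixed action, written `x k i = x(i|k)`. -/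
def MixedAction {K I : Type*} [Fintype K] [Fintype I] (x : K → I → ℝ) : Prop :=
  (∀ k i, 0 ≤ x k i) ∧ ∀ k, ∑ i, x k i = 1

/-- Marginal `x̄^p(i) = ∑_k p(k)·x(i|k)`. -/
def bar {K I : Type*} [Fintype K] (p : K → ℝ) (x : K → I → ℝ) (i : I) : ℝ :=
  ∑ k, p k * x k i

/-- Posterior `p^x(k|i)`. -/
def post {K I : Type*} [Fintype K] (p : K → ℝ) (x : K → I → ℝ) (i : I) (k : K) : ℝ :=
  if bar p x i ≠ 0 then x k i * p k / bar p x i else p k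

/-- The set `NR[x,ε,p]` of (x,ε)-non-revealing actions at p. -/
def NRset {K I : Type*} [Fintype K] [Fintype I] (x : K → I → ℝ) (ε : ℝ) (p : K → ℝ) :
    Finset I :=
  Finset.univ.filter fun i =>
    bar p x i ≠ 0 ∧ ∀ k, (1 - ε) * bar p x i ≤ x k i ∧ x k i ≤ (1 + ε) * bar p x i

/-- The set `R[x,ε,p]` of (x,ε)-revealing actions at p. -/
def Rset {K I : Type*} [Fintype K] [Fintype I] (x : K → I → ℝ) (ε : ℝ) (p : K → ℝ) :
    Finset I :=
  (Finset.univ.filter fun i => bar p x i ≠ 0) \ NRset x ε p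

/-- `x(A|k) = ∑_{i∈A} x(i|k)`. -/
def xOn {K I : Type*} (x : K → I → ℝ) (A : Finset I) (k : K) : ℝ := ∑ i ∈ A, x k i

/-- `x̄^p(A) = ∑_{i∈A} x̄^p(i)`. -/
def barOn {K I : Type*} [Fintype K] (p : K → ℝ) (x : K → I → ℝ) (A : Finset I) : ℝ :=
  ∑ i ∈ A, bar p x i

/-- The ε-silent mapping `c_ε(x,p)`. -/
def silent {K I : Type*} [Fintype K] [Fintype I] (ε : ℝ) (x : K → I → ℝ) (p : K → ℝ) :
    K → I → ℝ :=
  fun k i =>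
    if i ∈ NRset x ε p then
      ((1 - ε) * xOn x (NRset x ε p) k / barOn p x (NRset x ε p) + ε) * bar p x i
    else (1 - ε) * x k i + ε * bar p x i

/-- Membership in X₀. -/
def InX0 {K I : Type*} [Fintype K] (x : K → I → ℝ) (p p' : K → ℝ) : Prop :=
  (∀ (i : I) (k : K), 0 ≤ p' k + post p x i k - p k) ∧ ∀ k, 0 < p' k

/-- The translation mapping T(x,p,p'). -/
def translAction {K I : Type*} [Fintype K] (x : K → I → ℝ) (p p' : K → ℝ) : K → I → ℝ :=
  fun k i =>
    if InX0 x p p' then bar p x i / p' k * (p' k + post p x i k - p k) else x k i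

section Aux
variable {K I : Type*} [Fintype K] [Fintype I]

lemma bar_nonneg (p : K → ℝ) (x : K → I → ℝ) (hp : ∀ k, 0 ≤ p k)
    (hx : ∀ k i, 0 ≤ x k i) (i : I) : 0 ≤ bar p x i :=
  Finset.sum_nonneg fun k _ => mul_nonneg (hp k) (hx k i)

lemma x_le_one (x : K → I → ℝ) (hx : MixedAction x) (k : K) (i : I) : x k i ≤ 1 := by
  have := Finset.single_le_sum (f := fun i => x k i) (fun j _ => hx.1 k j) (Finset.mem_univ i)
  rw [hx.2 k] at this; exact this

lemma bar_le_one (p : K → ℝ) (x : K → I → ℝ) (hp : pSimplex p) (hx : MixedAction x) (i : I) :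
    bar p x i ≤ 1 := by
  have : bar p x i ≤ ∑ k, p k :=
    Finset.sum_le_sum fun k _ => by
      have := x_le_one x hx k i
      nlinarith [hp.1 k]
  rw [hp.2] at this; exact this

lemma pk_le_bar (p : K → ℝ) (x : K → I → ℝ) (hp : ∀ k, 0 ≤ p k)
    (hx : ∀ k i, 0 ≤ x k i) (k : K) (i : I) : p k * x k i ≤ bar p x i :=
  Finset.single_le_sum (f := fun k' => p k' * x k' i)
    (fun k' _ => mul_nonneg (hp k') (hx k' i)) (Finset.mem_univ k)

lemma x_eq_zero_of_bar_eq_zero (p : K → ℝ) (x : K → I → ℝ) (hpos : ∀ k, 0 < p k)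
    (hx : ∀ k i, 0 ≤ x k i) {i : I} (h : bar p x i = 0) (k : K) : x k i = 0 := by
  have h1 := pk_le_bar p x (fun k => (hpos k).le) hx k i
  rw [h] at h1
  nlinarith [hpos k, hx k i]

lemma sum_bar (p : K → ℝ) (x : K → I → ℝ) (hp : pSimplex p) (hx : MixedAction x) :
    ∑ i, bar p x i = 1 := by
  rw [show (∑ i, bar p x i) = ∑ k, p k * ∑ i, x k i by
    simp only [Finset.mul_sum, bar]; rw [Finset.sum_comm]]
  simp only [hx.2, mul_one, hp.2]

lemma key {K I : Type*} [Fintype K] [Fintype I] (x : K → I → ℝ) (hx : MixedAction x)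
    (p p' : K → ℝ) (hp : pSimplex p) (hp' : pSimplex p')
    (hpos : ∀ k, 0 < p k) (h : InX0 x p p') (i : I) (k : K) :
    p k * |x k i - bar p x i| ≤ p' k := by
  have hpk := hpos k
  have hp'k := h.2 k
  have hbarnn := bar_nonneg p x hp.1 hx.1
  rcases abs_cases (x k i - bar p x i) with ⟨he, _⟩ | ⟨he, _⟩
  · -- need p k * (x k i - bar p x i) ≤ p' k
    rw [he]
    rcases le_or_gt (x k i - bar p x i) 0 with hd | hd
    · nlinarith
    · -- the hard case
      set g : I → ℝ := fun i' => bar p x i' - x k i' with hg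
      have hsum : ∑ i', g i' = 0 := by
        simp only [hg, Finset.sum_sub_distrib, sum_bar p x hp hx, hx.2 k, sub_self]
      set d : ℝ := x k i - bar p x i with hdd
      have hd' : 0 < x k i - bar p x i := hd
      have hxpos : 0 < x k i := by linarith [hbarnn i]
      have hbari : 0 < bar p x i :=
        lt_of_lt_of_le (by positivity) (pk_le_bar p x hp.1 hx.1 k i)
      have hsum2 : 0 < ∑ i' ∈ Finset.univ.erase i, (g i' - d * bar p x i') := by
        have h1 : ∑ i' ∈ Finset.univ.erase i, g i' = d := by
          have := Finset.add_sum_erase Finset.univ g (Finset.mem_univ i)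
          rw [hsum] at this
          simp only [hg] at this ⊢
          linarith
        have h2 : ∑ i' ∈ Finset.univ.erase i, bar p x i' = 1 - bar p x i := by
          have := Finset.add_sum_erase Finset.univ (bar p x) (Finset.mem_univ i)
          rw [sum_bar p x hp hx] at this
          linarith
        rw [Finset.sum_sub_distrib, h1, ← Finset.mul_sum, h2]
        nlinarith
      have : ∃ i' ∈ Finset.univ.erase i, (0:ℝ) < g i' - d * bar p x i' := by
        by_contra hc
        push_neg at hc
        have : ∑ i' ∈ Finset.univ.erase i, (g i' - d * bar p x i') ≤ 0 :=
          Finset.sum_nonpos hc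
        linarith
      obtain ⟨i', _, hi'⟩ := this
      have hbari' : 0 < bar p x i' := by
        rcases eq_or_lt_of_le (hbarnn i') with hb | hb
        · exfalso
          have hz := x_eq_zero_of_bar_eq_zero p x hpos hx.1 hb.symm k
          simp only [hg, ← hb, hz] at hi'
          nlinarith
        · exact hb
      have hcon := h.1 i' k
      rw [post, if_pos (ne_of_gt hbari')] at hcon
      -- 0 ≤ p' k + x k i' * p k / bar i' - p k
      have hcon2 : p k * (bar p x i' - x k i') ≤ p' k * bar p x i' := by
        have := mul_le_mul_of_nonneg_right hcon hbari'.le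
        field_simp at this ⊢
        nlinarith
      -- g i' ≥ d * bar i'
      have hgd : d * bar p x i' ≤ bar p x i' - x k i' := by
        have : g i' = bar p x i' - x k i' := rfl
        linarith
      have h5 : p k * (d * bar p x i') ≤ p' k * bar p x i' := by
        have := mul_le_mul_of_nonneg_left hgd hpk.le
        linarith
      nlinarith
  · rw [he]
    rcases eq_or_ne (bar p x i) 0 with hb | hb
    · have := x_eq_zero_of_bar_eq_zero p x hpos hx.1 hb k
      rw [this, hb]; simp; positivity
    · have hbari : 0 < bar p x i := lt_of_le_of_ne (hbarnn i) (Ne.symm hb)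
      have hcon := h.1 i k
      rw [post, if_pos hb] at hcon
      have hble := bar_le_one p x hp hx i
      have : p k * (bar p x i - x k i) ≤ p' k * bar p x i := by
        have := mul_le_mul_of_nonneg_right hcon hbari.le
        field_simp at this ⊢
        nlinarith
      nlinarith

end Aux

/-- pointwise bound on the translation in terms of ‖p−p'‖_∞·‖1/p‖_∞. -/
theorem translAction_pointwise_close {K I : Type*} [Fintype K] [Fintype I]
    [Nonempty K] [Nonempty I]
    (x : K → I → ℝ) (hx : MixedAction x)
    (p p' : K → ℝ) (hp : pSimplex p) (hp' : pSimplex p')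
    (hpos : ∀ k, 0 < p k) :
    ∀ (i : I) (k : K),
      |translAction x p p' k i - x k i| ≤
        (Finset.univ.sup' Finset.univ_nonempty fun k' => |p k' - p' k'|) *
          Finset.univ.sup' Finset.univ_nonempty fun k' => 1 / p k' := by
  intro i k
  set M := Finset.univ.sup' Finset.univ_nonempty fun k' => |p k' - p' k'| with hM
  set S := Finset.univ.sup' Finset.univ_nonempty fun k' => 1 / p k' with hS
  have hMk : |p k - p' k| ≤ M := Finset.le_sup' (fun k' => |p k' - p' k'|) (Finset.mem_univ k)
  have hSk : 1 / p k ≤ S := Finset.le_sup' (fun k' => 1 / p k') (Finset.mem_univ k)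
  have hMnn : 0 ≤ M := le_trans (abs_nonneg _) hMk
  have hSpos : 0 < S := lt_of_lt_of_le (one_div_pos.mpr (hpos k)) hSk
  by_cases hX : InX0 x p p'
  · have hpk := hpos k
    have hp'k := hX.2 k
    rcases eq_or_ne (bar p x i) 0 with hb | hb
    · rw [translAction, if_pos hX, hb,
        x_eq_zero_of_bar_eq_zero p x hpos hx.1 hb k]
      simp
      positivity
    · have hbari : 0 < bar p x i :=
        lt_of_le_of_ne (bar_nonneg p x hp.1 hx.1 i) (Ne.symm hb)
      have hdiff : translAction x p p' k i - x k i
          = (x k i - bar p x i) * (p k - p' k) / p' k := by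
        rw [translAction, if_pos hX, post, if_pos hb]
        field_simp
        ring
      rw [hdiff, abs_div, abs_mul, abs_of_pos hp'k]
      have hkey := key x hx p p' hp hp' hpos hX i k
      -- |x - bar| ≤ p' k / p k
      have h1 : |x k i - bar p x i| * |p k - p' k| / p' k ≤ |p k - p' k| / p k := by
        rw [div_le_div_iff₀ hp'k hpk]
        calc |x k i - bar p x i| * |p k - p' k| * p k
            = (p k * |x k i - bar p x i|) * |p k - p' k| := by ring
          _ ≤ p' k * |p k - p' k| := by
              exact mul_le_mul_of_nonneg_right hkey (abs_nonneg _)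
          _ = |p k - p' k| * p' k := by ring
      refine h1.trans ?_
      rw [div_eq_mul_inv, ← one_div]
      exact mul_le_mul hMk hSk (by positivity) hMnn
  · rw [translAction, if_neg hX]
    simp
    positivity
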